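/- arXiv:1203.1414 — 2 statements merged into one kernel-verified Lean document; each statement's English description precedes it below -/
import Mathlib

section
/- Let 0 < 1/p < α < 1. Every u ∈ E_{α,p} admits a continuous representative vanishing at a, and the embedding E_{α,p} ↪ C([a,b];ℝ^d) is continuous: ‖u‖_∞ ≤ ((b-a)^{α-1/p} / (Γ(α)((α-1)q+1)^{1/q})) ‖D^α_- u‖_{L^p}, where q = p/(p-1). -/
open MeasureTheory Set

noncomputable section

variable {V : Type*} [NormedAddCommGroup V] [NormedSpace ℝ V]

/-- Left Riemann-Liouville fractional integral of order `α` with inferior limit `a`: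
`I^α_- f (t) = (1/Γ(α)) ∫_a^t (t-ξ)^(α-1) f(ξ) dξ`. -/
def Ileft (a α : ℝ) (f : ℝ → V) (t : ℝ) : V :=
  (Real.Gamma α)⁻¹ • ∫ ξ in a..t, ((t - ξ) ^ (α - 1)) • f ξ

/-- Left Riemann-Liouville fractional derivative of order `α`:
`D^α_- f = (d/dt) (I^{1-α}_- f)`. -/
def Dleft (a α : ℝ) (f : ℝ → V) (t : ℝ) : V :=
  deriv (Ileft a (1 - α) f) t

/-- Right Riemann-Liouville fractional integral of order `α` with superior limit `b`. -/
def Iright (b α : ℝ) (f : ℝ → V) (t : ℝ) : V :=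
  (Real.Gamma α)⁻¹ • ∫ ξ in t..b, ((ξ - t) ^ (α - 1)) • f ξ

/-- Right Riemann-Liouville fractional derivative of order `α`:
`D^α_+ f = -(d/dt) (I^{1-α}_+ f)`. -/
def Dright (b α : ℝ) (f : ℝ → V) (t : ℝ) : V :=
  - deriv (Iright b (1 - α) f) t

/-- Lebesgue measure restricted to the interval `(a,b)`. -/
def μab (a b : ℝ) : Measure ℝ := (volume : Measure ℝ).restrict (Set.Ioo a b)

/-- The `L^p((a,b))` norm, as a real number. -/
def LpNorm (p a b : ℝ) (f : ℝ → V) : ℝ :=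
  (eLpNorm f (ENNReal.ofReal p) (μab a b)).toReal

/-- Membership in the space `E_{α,p}`: `u ∈ L^p`, `D^α_- u ∈ L^p` and `I^α_-(D^α_- u) = u` a.e. -/
def MemE (a b α p : ℝ) (u : ℝ → V) : Prop :=
  MemLp u (ENNReal.ofReal p) (μab a b) ∧
  MemLp (Dleft a α u) (ENNReal.ofReal p) (μab a b) ∧
  ∀ᵐ t ∂(μab a b), Ileft a α (Dleft a α u) t = u t

end

section FracAux
open intervalIntegral
open scoped ENNReal NNReal
noncomputable section
variable {V : Type*} [NormedAddCommGroup V] [NormedSpace ℝ V]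

lemma lint_kernel {ρ : ℝ} (hρ : -1 < ρ) {c d t : ℝ} (hcd : c ≤ d) (hdt : d ≤ t) :
    ∫⁻ ξ in Set.Ioc c d, ENNReal.ofReal ((t - ξ) ^ ρ) =
      ENNReal.ofReal (((t - c) ^ (ρ + 1) - (t - d) ^ (ρ + 1)) / (ρ + 1)) := by
  have hint : IntervalIntegrable (fun ξ : ℝ => (t - ξ) ^ ρ) volume c d := by
    have h := (intervalIntegrable_rpow' hρ (a := t - c) (b := t - d)).comp_sub_left t
    simpa using h
  have hint' : IntegrableOn (fun ξ : ℝ => (t - ξ) ^ ρ) (Set.Ioc c d) volume :=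
    (intervalIntegrable_iff_integrableOn_Ioc_of_le hcd).1 hint
  have hnn : 0 ≤ᵐ[volume.restrict (Set.Ioc c d)] fun ξ : ℝ => (t - ξ) ^ ρ := by
    filter_upwards [ae_restrict_mem measurableSet_Ioc] with ξ hξ
    exact Real.rpow_nonneg (by linarith [hξ.2]) _
  rw [← ofReal_integral_eq_lintegral_ofReal hint' hnn]
  congr 1
  rw [← intervalIntegral.integral_of_le hcd]
  have h2 : (∫ ξ in c..d, ((t - ξ) ^ ρ : ℝ)) = ∫ x in t - d..t - c, x ^ ρ :=
    intervalIntegral.integral_comp_sub_left (fun x : ℝ => x ^ ρ) t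
  rw [h2, integral_rpow (Or.inl hρ)]

lemma holder_ennreal {p q : ℝ} (hqp : Real.HolderConjugate q p) {μ : Measure ℝ}
    {φ : ℝ → ℝ} {f : ℝ → V} (hφ : AEMeasurable φ μ) (hf : AEStronglyMeasurable f μ) :
    ENNReal.ofReal ‖∫ ξ, φ ξ • f ξ ∂μ‖ ≤
      (∫⁻ ξ, ENNReal.ofReal (|φ ξ| ^ q) ∂μ) ^ (1 / q) *
        (∫⁻ ξ, (‖f ξ‖₊ : ℝ≥0∞) ^ p ∂μ) ^ (1 / p) := by
  have h1 : ENNReal.ofReal ‖∫ ξ, φ ξ • f ξ ∂μ‖ ≤ ∫⁻ ξ, (‖φ ξ • f ξ‖₊ : ℝ≥0∞) ∂μ := by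
    rw [ofReal_norm]
    exact enorm_integral_le_lintegral_enorm _
  refine h1.trans ?_
  have h2 : ∀ ξ, (‖φ ξ • f ξ‖₊ : ℝ≥0∞) =
      ((fun ξ => ENNReal.ofReal |φ ξ|) * fun ξ => (‖f ξ‖₊ : ℝ≥0∞)) ξ := by
    intro ξ
    simp [nnnorm_smul, ENNReal.coe_mul, ← Real.enorm_eq_ofReal_abs, enorm_eq_nnnorm]
  calc ∫⁻ ξ, (‖φ ξ • f ξ‖₊ : ℝ≥0∞) ∂μ
      = ∫⁻ ξ, ((fun ξ => ENNReal.ofReal |φ ξ|) * fun ξ => (‖f ξ‖₊ : ℝ≥0∞)) ξ ∂μ := by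
        simp only [h2]
    _ ≤ (∫⁻ ξ, ENNReal.ofReal |φ ξ| ^ q ∂μ) ^ (1 / q) *
          (∫⁻ ξ, (‖f ξ‖₊ : ℝ≥0∞) ^ p ∂μ) ^ (1 / p) :=
        ENNReal.lintegral_mul_le_Lp_mul_Lq μ hqp
          (ENNReal.measurable_ofReal.comp_aemeasurable
            (continuous_abs.measurable.comp_aemeasurable hφ)) hf.enorm
    _ = (∫⁻ ξ, ENNReal.ofReal (|φ ξ| ^ q) ∂μ) ^ (1 / q) *
          (∫⁻ ξ, (‖f ξ‖₊ : ℝ≥0∞) ^ p ∂μ) ^ (1 / p) := by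
        congr 1
        congr 1
        refine lintegral_congr fun ξ => ?_
        rw [ENNReal.ofReal_rpow_of_nonneg (abs_nonneg _) hqp.nonneg]

lemma rpow_sub_le {x y q : ℝ} (hy : 0 ≤ y) (hxy : y ≤ x) (hq : 1 ≤ q) :
    (x - y) ^ q ≤ x ^ q - y ^ q := by
  have h := NNReal.add_rpow_le_rpow_add (x - y).toNNReal y.toNNReal hq
  have hxny : ((x - y).toNNReal : ℝ) = x - y := Real.coe_toNNReal _ (by linarith)
  have hyy : (y.toNNReal : ℝ) = y := Real.coe_toNNReal _ hy
  have hsum : (x - y).toNNReal + y.toNNReal = x.toNNReal := by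
    ext
    simp [hxny, hyy, Real.coe_toNNReal _ (hy.trans hxy)]
  rw [hsum] at h
  have h' : ((x - y).toNNReal ^ q + y.toNNReal ^ q : ℝ≥0) ≤ ((x.toNNReal ^ q : ℝ≥0) : ℝ≥0) := h
  have := (NNReal.coe_le_coe).2 h'
  push_cast [NNReal.coe_rpow] at this
  rw [hxny, hyy, Real.coe_toNNReal _ (hy.trans hxy)] at this
  linarith

end
end FracAux

open scoped ENNReal NNReal

/-- for `0 < 1/p < α < 1`, every `u ∈ E_{α,p}` has a continuous
representative vanishing at `a`, and the embedding `E_{α,p} ↪ C([a,b];ℝ^d)` is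
continuous: `‖u‖_∞ ≤ ((b-a)^{α-1/p}/(Γ(α)((α-1)q+1)^{1/q})) ‖D^α_- u‖_{L^p}`,
`q = p/(p-1)`. -/
theorem E_embeds_in_C (a b : ℝ) (hab : a < b) (d : ℕ) (α p q : ℝ)
    (hp : 1 < p) (hpα : 1 / p < α) (hα1 : α < 1) (hq : q = p / (p - 1)) :
    ∀ u : ℝ → EuclideanSpace ℝ (Fin d), MemE a b α p u →
      ∃ v : ℝ → EuclideanSpace ℝ (Fin d),
        ContinuousOn v (Set.Icc a b) ∧ v a = 0 ∧
        (∀ᵐ t ∂(μab a b), v t = u t) ∧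
        ∀ t ∈ Set.Icc a b,
          ‖v t‖ ≤ (b - a) ^ (α - 1 / p) / (Real.Gamma α * ((α - 1) * q + 1) ^ (1 / q)) *
            LpNorm p a b (Dleft a α u) := by
  intro u hu
  obtain ⟨-, hf, hae⟩ := hu
  set f : ℝ → EuclideanSpace ℝ (Fin d) := Dleft a α u with hfdef
  have hp0 : 0 < p := lt_trans one_pos hp
  have hpq : p.HolderConjugate q := (Real.holderConjugate_iff_eq_conjExponent hp).2 hq
  have hq1 : 1 < q := hpq.symm.lt
  have hq0 : 0 < q := hpq.symm.pos
  have hinv : p⁻¹ + q⁻¹ = 1 := hpq.inv_add_inv_eq_one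
  set m : ℝ := (α - 1) * q + 1 with hmdef
  have hpinv : (1 : ℝ)/p = 1 - 1/q := by
    rw [one_div, one_div]; linarith
  have hpq' : 1/p * q = q - 1 := by
    rw [hpinv]; field_simp
  have hm0 : 0 < m := by
    have h1 : 1/p * q < α * q := mul_lt_mul_of_pos_right hpα hq0
    rw [hmdef]; nlinarith [h1, hpq']
  have hrq : (-1:ℝ) < (α - 1) * q := by rw [hmdef] at hm0; linarith
  have hrqneg : (α - 1) * q ≤ 0 :=
    le_of_lt (mul_neg_of_neg_of_pos (by linarith) hq0)
  have hα0 : 0 < α := lt_trans (one_div_pos.2 hp0) hpα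
  have hΓ : 0 < Real.Gamma α := Real.Gamma_pos_of_pos hα0
  have hαp : 0 < α - 1/p := by linarith
  have hmq' : m = (α - 1/p) * q := by
    rw [hmdef, hpinv]; field_simp; ring
  have hmq : m / q = α - 1/p := by
    rw [hmq', mul_div_cancel_right₀ _ hq0.ne']
  set P : ℝ≥0∞ := ENNReal.ofReal p with hPdef
  set Q : ℝ≥0∞ := ENNReal.ofReal q with hQdef
  have hP0 : P ≠ 0 := by simp [hPdef, ENNReal.ofReal_eq_zero]; linarith
  have hPtop : P ≠ ⊤ := ENNReal.ofReal_ne_top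
  have hPto : P.toReal = p := ENNReal.toReal_ofReal hp0.le
  have hQ0 : Q ≠ 0 := by simp [hQdef, ENNReal.ofReal_eq_zero]; linarith
  have hQtop : Q ≠ ⊤ := ENNReal.ofReal_ne_top
  have hQto : Q.toReal = q := ENNReal.toReal_ofReal hq0.le
  set E : ℝ≥0∞ := eLpNorm f P (μab a b) with hEdef
  have hEtop : E ≠ ⊤ := hf.2.ne
  have hEeq : E = (∫⁻ ξ in Ioo a b, (‖f ξ‖₊ : ℝ≥0∞) ^ p) ^ (1/p) := by
    rw [hEdef, eLpNorm_eq_lintegral_rpow_enorm_toReal hP0 hPtop, hPto]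
    rfl
  have hL0 : 0 ≤ E.toReal := ENNReal.toReal_nonneg
  have hLp : LpNorm p a b f = E.toReal := rfl
  have hkm : ∀ τ : ℝ, Measurable fun ξ : ℝ => (τ - ξ) ^ (α - 1) := by
    intro τ; fun_prop
  have hfR : ∀ {c dd : ℝ}, a ≤ c → dd ≤ b → MemLp f P (volume.restrict (Ioc c dd)) := by
    intro c dd hc hd
    have h1 : MemLp f P (volume.restrict (Ioo c dd)) :=
      hf.mono_measure (Measure.restrict_mono (Set.Ioo_subset_Ioo hc hd) le_rfl)
    rwa [Measure.restrict_congr_set Ioo_ae_eq_Ioc] at h1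
  have hker : ∀ {c dd τ : ℝ}, c ≤ dd → dd ≤ τ →
      (∫⁻ ξ in Ioc c dd, ENNReal.ofReal (|(τ - ξ) ^ (α - 1)| ^ q)) =
        ENNReal.ofReal (((τ - c) ^ m - (τ - dd) ^ m) / m) := by
    intro c dd τ hcd hdτ
    have hcg : ∀ ξ ∈ Ioc c dd, ENNReal.ofReal (|(τ - ξ) ^ (α - 1)| ^ q) =
        ENNReal.ofReal ((τ - ξ) ^ ((α - 1) * q)) := by
      intro ξ hξ
      have hτξ : (0:ℝ) ≤ τ - ξ := by linarith [hξ.2]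
      rw [abs_of_nonneg (Real.rpow_nonneg hτξ _), ← Real.rpow_mul hτξ]
    rw [setLIntegral_congr_fun measurableSet_Ioc hcg,
      lint_kernel hrq hcd hdτ]
  have hφmem : ∀ {c dd τ : ℝ}, c ≤ dd → dd ≤ τ →
      MemLp (fun ξ : ℝ => (τ - ξ) ^ (α - 1)) Q (volume.restrict (Ioc c dd)) := by
    intro c dd τ hcd hdτ
    refine ⟨(hkm τ).aestronglyMeasurable, ?_⟩
    rw [eLpNorm_eq_lintegral_rpow_enorm_toReal hQ0 hQtop, hQto]
    refine ENNReal.rpow_lt_top_of_nonneg (one_div_nonneg.2 hq0.le) ?_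
    have hpt : ∀ ξ : ℝ, ‖(τ - ξ) ^ (α - 1)‖ₑ ^ q =
        ENNReal.ofReal (|(τ - ξ) ^ (α - 1)| ^ q) := by
      intro ξ
      rw [Real.enorm_eq_ofReal_abs, ENNReal.ofReal_rpow_of_nonneg (abs_nonneg _) hq0.le]
    simp_rw [hpt]
    rw [hker hcd hdτ]
    exact ENNReal.ofReal_ne_top
  have h1qp : (1:ℝ≥0∞)/1 = 1/Q + 1/P := by
    rw [div_one, one_div, one_div, hQdef, hPdef, add_comm]
    exact hpq.inv_add_inv_ennreal.symm
  have hIntOn : ∀ {c dd τ : ℝ}, a ≤ c → c ≤ dd → dd ≤ b → dd ≤ τ →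
      IntegrableOn (fun ξ => ((τ - ξ) ^ (α - 1)) • f ξ) (Ioc c dd) volume := by
    intro c dd τ hac hcd hdb hdτ
    have hsm := (hfR hac hdb).smul (hφmem hcd hdτ) (hpqr := (⟨by simpa [one_div] using h1qp.symm⟩ : ENNReal.HolderTriple Q P 1))
    exact memLp_one_iff_integrable.1 hsm
  have hest : ∀ {c dd : ℝ} (φ : ℝ → ℝ), a ≤ c → c ≤ dd → dd ≤ b → Measurable φ →
      ENNReal.ofReal ‖∫ ξ in Ioc c dd, φ ξ • f ξ‖ ≤
        (∫⁻ ξ in Ioc c dd, ENNReal.ofReal (|φ ξ| ^ q)) ^ (1/q) * E := by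
    intro c dd φ hac hcd hdb hφm
    refine (holder_ennreal hpq.symm hφm.aemeasurable (hfR hac hdb).1).trans ?_
    refine mul_le_mul' le_rfl ?_
    have h1 : (∫⁻ ξ in Ioc c dd, (‖f ξ‖₊:ℝ≥0∞) ^ p) ≤ ∫⁻ ξ in Ioo a b, (‖f ξ‖₊:ℝ≥0∞) ^ p := by
      rw [← Measure.restrict_congr_set Ioo_ae_eq_Ioc]
      exact lintegral_mono_set (Set.Ioo_subset_Ioo hac hdb)
    rw [hEeq]
    exact ENNReal.rpow_le_rpow h1 (one_div_nonneg.2 hp0.le)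
  have hbridge : ∀ {x cst : ℝ}, 0 ≤ cst →
      ENNReal.ofReal x ≤ ENNReal.ofReal cst * E → x ≤ cst * E.toReal := by
    intro x cst hcst h
    have hne : ENNReal.ofReal cst * E ≠ ⊤ := ENNReal.mul_ne_top ENNReal.ofReal_ne_top hEtop
    have h2 := (ENNReal.ofReal_le_iff_le_toReal hne).1 h
    rwa [ENNReal.toReal_mul, ENNReal.toReal_ofReal hcst] at h2
  -- single estimate
  have key1 : ∀ t, a ≤ t → t ≤ b →
      ‖∫ ξ in Ioc a t, ((t - ξ) ^ (α - 1)) • f ξ‖ ≤ ((t - a) ^ m / m) ^ (1/q) * E.toReal := by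
    intro t hat htb
    have hnn : (0:ℝ) ≤ (t - a) ^ m / m :=
      div_nonneg (Real.rpow_nonneg (sub_nonneg.2 hat) _) hm0.le
    refine hbridge (Real.rpow_nonneg hnn _) ?_
    refine (hest _ le_rfl hat htb (hkm t)).trans ?_
    refine mul_le_mul' ?_ le_rfl
    rw [hker hat le_rfl, sub_self, Real.zero_rpow hm0.ne', sub_zero,
      ENNReal.ofReal_rpow_of_nonneg hnn (one_div_nonneg.2 hq0.le)]
  -- difference estimate
  have key2 : ∀ s t : ℝ, a ≤ s → s ≤ t → t ≤ b →
      ‖Ileft a α f t - Ileft a α f s‖ ≤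
        (Real.Gamma α)⁻¹ * (2 * ((t - s) ^ m / m) ^ (1/q)) * E.toReal := by
    intro s t has hst htb
    have hat : a ≤ t := has.trans hst
    have hsb : s ≤ b := hst.trans htb
    have hnn : (0:ℝ) ≤ (t - s) ^ m / m :=
      div_nonneg (Real.rpow_nonneg (sub_nonneg.2 hst) _) hm0.le
    have hnn' : (0:ℝ) ≤ ((t - s) ^ m / m) ^ (1/q) := Real.rpow_nonneg hnn _
    have hIl : Ileft a α f t - Ileft a α f s =
        (Real.Gamma α)⁻¹ • ((∫ ξ in Ioc a t, ((t - ξ) ^ (α - 1)) • f ξ) -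
          ∫ ξ in Ioc a s, ((s - ξ) ^ (α - 1)) • f ξ) := by
      rw [Ileft, Ileft, intervalIntegral.integral_of_le hat,
        intervalIntegral.integral_of_le has, smul_sub]
    have hsplit : (∫ ξ in Ioc a t, ((t - ξ) ^ (α - 1)) • f ξ) =
        (∫ ξ in Ioc a s, ((t - ξ) ^ (α - 1)) • f ξ) +
          ∫ ξ in Ioc s t, ((t - ξ) ^ (α - 1)) • f ξ := by
      rw [← setIntegral_union (Set.Ioc_disjoint_Ioc_of_le le_rfl) measurableSet_Ioc
        (hIntOn le_rfl has hsb hst) (hIntOn has hst htb le_rfl),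
        Set.Ioc_union_Ioc_eq_Ioc has hst]
    have hsub : (∫ ξ in Ioc a s, ((t - ξ) ^ (α - 1)) • f ξ) -
        (∫ ξ in Ioc a s, ((s - ξ) ^ (α - 1)) • f ξ) =
        ∫ ξ in Ioc a s, ((t - ξ) ^ (α - 1) - (s - ξ) ^ (α - 1)) • f ξ := by
      rw [← integral_sub (hIntOn le_rfl has hsb hst) (hIntOn le_rfl has hsb le_rfl)]
      congr 1
      ext ξ
      rw [sub_smul]
    have hp1 : ‖∫ ξ in Ioc s t, ((t - ξ) ^ (α - 1)) • f ξ‖ ≤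
        ((t - s) ^ m / m) ^ (1/q) * E.toReal := by
      refine hbridge hnn' ?_
      refine (hest _ has hst htb (hkm t)).trans ?_
      refine mul_le_mul' ?_ le_rfl
      rw [hker hst le_rfl, sub_self, Real.zero_rpow hm0.ne', sub_zero,
        ENNReal.ofReal_rpow_of_nonneg hnn (one_div_nonneg.2 hq0.le)]
    have hp2 : ‖∫ ξ in Ioc a s, ((t - ξ) ^ (α - 1) - (s - ξ) ^ (α - 1)) • f ξ‖ ≤
        ((t - s) ^ m / m) ^ (1/q) * E.toReal := by
      refine hbridge hnn' ?_
      refine (hest _ le_rfl has hsb ((hkm t).sub (hkm s))).trans ?_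
      refine mul_le_mul' ?_ le_rfl
      have hJ : (∫⁻ ξ in Ioc a s,
          ENNReal.ofReal (|(t - ξ) ^ (α - 1) - (s - ξ) ^ (α - 1)| ^ q)) ≤
          ENNReal.ofReal ((t - s) ^ m / m) := by
        rw [← Measure.restrict_congr_set Ioo_ae_eq_Ioc]
        set G : ℝ → ℝ≥0∞ := fun ξ => ENNReal.ofReal ((t - ξ) ^ ((α - 1) * q)) with hGdef
        set F : ℝ → ℝ≥0∞ := fun ξ => ENNReal.ofReal ((s - ξ) ^ ((α - 1) * q)) with hFdef
        have hGm : Measurable G := by rw [hGdef]; fun_prop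
        have hFm : Measurable F := by rw [hFdef]; fun_prop
        have hGF : G ≤ᵐ[volume.restrict (Ioo a s)] F := by
          filter_upwards [ae_restrict_mem measurableSet_Ioo] with ξ hξ
          have h1 : (0:ℝ) < s - ξ := by linarith [hξ.2]
          have h2 : s - ξ ≤ t - ξ := by linarith
          exact ENNReal.ofReal_le_ofReal (Real.rpow_le_rpow_of_nonpos h1 h2 hrqneg)
        have hGfin : (∫⁻ ξ in Ioo a s, G ξ) ≠ ⊤ := by
          rw [Measure.restrict_congr_set Ioo_ae_eq_Ioc, hGdef, lint_kernel hrq has hst]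
          exact ENNReal.ofReal_ne_top
        have hpt : ∀ ξ ∈ Ioo a s,
            ENNReal.ofReal (|(t - ξ) ^ (α - 1) - (s - ξ) ^ (α - 1)| ^ q) ≤ F ξ - G ξ := by
          intro ξ hξ
          have h1 : (0:ℝ) < s - ξ := by linarith [hξ.2]
          have h1' : (0:ℝ) < t - ξ := by linarith
          have h2 : s - ξ ≤ t - ξ := by linarith
          have hyx : (t - ξ) ^ (α - 1) ≤ (s - ξ) ^ (α - 1) :=
            Real.rpow_le_rpow_of_nonpos h1 h2 (by linarith)
          have hy0 : (0:ℝ) ≤ (t - ξ) ^ (α - 1) := Real.rpow_nonneg h1'.le _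
          have habs : |(t - ξ) ^ (α - 1) - (s - ξ) ^ (α - 1)| =
              (s - ξ) ^ (α - 1) - (t - ξ) ^ (α - 1) := by
            rw [abs_of_nonpos (by linarith), neg_sub]
          rw [habs]
          have hle := rpow_sub_le hy0 hyx hq1.le
          refine (ENNReal.ofReal_le_ofReal hle).trans ?_
          rw [ENNReal.ofReal_sub _ (Real.rpow_nonneg hy0 _),
            ← Real.rpow_mul h1.le, ← Real.rpow_mul h1'.le]
        calc (∫⁻ ξ in Ioo a s, ENNReal.ofReal (|(t - ξ) ^ (α - 1) - (s - ξ) ^ (α - 1)| ^ q))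
            ≤ ∫⁻ ξ in Ioo a s, (F ξ - G ξ) := setLIntegral_mono (hFm.sub hGm) hpt
          _ = (∫⁻ ξ in Ioo a s, F ξ) - ∫⁻ ξ in Ioo a s, G ξ := lintegral_sub hGm hGfin hGF
          _ ≤ ENNReal.ofReal ((t - s) ^ m / m) := by
              have hFv : (∫⁻ ξ in Ioo a s, F ξ) = ENNReal.ofReal ((s - a) ^ m / m) := by
                rw [Measure.restrict_congr_set Ioo_ae_eq_Ioc, hFdef,
                  lint_kernel hrq has le_rfl, sub_self, Real.zero_rpow hm0.ne', sub_zero]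
              have hGv : (∫⁻ ξ in Ioo a s, G ξ) =
                  ENNReal.ofReal (((t - a) ^ m - (t - s) ^ m) / m) := by
                rw [Measure.restrict_congr_set Ioo_ae_eq_Ioc, hGdef,
                  lint_kernel hrq has hst]
              rw [hFv, hGv]
              refine tsub_le_iff_right.2 ?_
              have hZ : (0:ℝ) ≤ (t - s) ^ m / m := hnn
              have hY : (0:ℝ) ≤ ((t - a) ^ m - (t - s) ^ m) / m := by
                have := Real.rpow_le_rpow (by linarith : (0:ℝ) ≤ t - s)
                  (by linarith : t - s ≤ t - a) hm0.le
                exact div_nonneg (by linarith) hm0.le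
              rw [← ENNReal.ofReal_add hZ hY]
              apply ENNReal.ofReal_le_ofReal
              have h3 : (s - a) ^ m ≤ (t - a) ^ m :=
                Real.rpow_le_rpow (by linarith) (by linarith) hm0.le
              rw [← add_div]
              have h4 : (t - s) ^ m + ((t - a) ^ m - (t - s) ^ m) = (t - a) ^ m := by ring
              rw [h4]
              exact (div_le_div_iff_of_pos_right hm0).2 h3
      calc (∫⁻ ξ in Ioc a s,
            ENNReal.ofReal (|(t - ξ) ^ (α - 1) - (s - ξ) ^ (α - 1)| ^ q)) ^ (1/q)
          ≤ (ENNReal.ofReal ((t - s) ^ m / m)) ^ (1/q) :=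
            ENNReal.rpow_le_rpow hJ (one_div_nonneg.2 hq0.le)
        _ = ENNReal.ofReal (((t - s) ^ m / m) ^ (1/q)) :=
            ENNReal.ofReal_rpow_of_nonneg hnn (one_div_nonneg.2 hq0.le)
    -- combine
    rw [hIl, hsplit]
    have heq : ((∫ ξ in Ioc a s, ((t - ξ) ^ (α - 1)) • f ξ) +
        (∫ ξ in Ioc s t, ((t - ξ) ^ (α - 1)) • f ξ)) -
        (∫ ξ in Ioc a s, ((s - ξ) ^ (α - 1)) • f ξ) =
        (∫ ξ in Ioc s t, ((t - ξ) ^ (α - 1)) • f ξ) +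
        ((∫ ξ in Ioc a s, ((t - ξ) ^ (α - 1)) • f ξ) -
          (∫ ξ in Ioc a s, ((s - ξ) ^ (α - 1)) • f ξ)) := by abel
    rw [heq, hsub, norm_smul, Real.norm_eq_abs, abs_of_pos (inv_pos.2 hΓ)]
    have hG0 : (0:ℝ) ≤ (Real.Gamma α)⁻¹ := (inv_pos.2 hΓ).le
    refine le_trans (mul_le_mul_of_nonneg_left
      ((norm_add_le _ _).trans (add_le_add hp1 hp2)) hG0) (le_of_eq (by ring))
  -- the representative
  refine ⟨Ileft a α f, ?_, ?_, hae, ?_⟩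
  · -- continuity
    intro x hx
    have hholder : ∀ y ∈ Icc a b,
        dist (Ileft a α f y) (Ileft a α f x) ≤
          (Real.Gamma α)⁻¹ * (2 * (|y - x| ^ m / m) ^ (1/q)) * E.toReal := by
      intro y hy
      rw [dist_eq_norm]
      rcases le_total x y with h | h
      · have h' := key2 x y hx.1 h hy.2
        rwa [abs_of_nonneg (sub_nonneg.2 h)]
      · have h' := key2 y x hy.1 h hx.2
        rw [← norm_neg, neg_sub] at h'
        rw [abs_of_nonpos (sub_nonpos.2 h), neg_sub]
        exact h'
    have h1 : Filter.Tendsto (fun y : ℝ => |y - x|) (nhds x) (nhds 0) := by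
      have h := ((continuous_sub_right x).abs).tendsto x
      simpa using h
    have hgt : Filter.Tendsto (fun y : ℝ =>
        (Real.Gamma α)⁻¹ * (2 * (|y - x| ^ m / m) ^ (1/q)) * E.toReal)
        (nhds x) (nhds 0) := by
      have h2 : ContinuousAt (fun z : ℝ => z ^ m) 0 :=
        Real.continuousAt_rpow_const 0 m (Or.inr hm0.le)
      have h3 : Filter.Tendsto (fun y : ℝ => |y - x| ^ m) (nhds x) (nhds 0) := by
        have h := h2.tendsto.comp h1
        simpa [Function.comp_def, Real.zero_rpow hm0.ne'] using h
      have h4 : Filter.Tendsto (fun y : ℝ => |y - x| ^ m / m) (nhds x) (nhds 0) := by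
        simpa using h3.div_const m
      have h5 : ContinuousAt (fun z : ℝ => z ^ (1/q)) 0 :=
        Real.continuousAt_rpow_const 0 _ (Or.inr (one_div_nonneg.2 hq0.le))
      have h6 : Filter.Tendsto (fun y : ℝ => (|y - x| ^ m / m) ^ (1/q))
          (nhds x) (nhds 0) := by
        have h := h5.tendsto.comp h4
        simpa [Function.comp_def, one_div, Real.zero_rpow (inv_pos.2 hq0).ne'] using h
      have h7 := (h6.const_mul (2:ℝ)).const_mul ((Real.Gamma α)⁻¹)
      have h8 := h7.mul_const E.toReal
      simpa using h8
    have htv : Filter.Tendsto (Ileft a α f) (nhdsWithin x (Icc a b))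
        (nhds (Ileft a α f x)) := by
      rw [tendsto_iff_dist_tendsto_zero]
      refine squeeze_zero' (Filter.Eventually.of_forall fun y => dist_nonneg) ?_
        (hgt.mono_left nhdsWithin_le_nhds)
      filter_upwards [self_mem_nhdsWithin] with y hy
      exact hholder y hy
    exact htv
  · simp [Ileft, intervalIntegral.integral_same]
  · -- the bound
    intro t ht
    rw [Ileft, intervalIntegral.integral_of_le ht.1, norm_smul, Real.norm_eq_abs,
      abs_of_pos (inv_pos.2 hΓ), hLp]
    have h1 := key1 t ht.1 ht.2
    have hG0 : (0:ℝ) ≤ (Real.Gamma α)⁻¹ := (inv_pos.2 hΓ).le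
    have h2 : ((t - a) ^ m / m) ^ (1/q) ≤ (b - a) ^ (α - 1/p) / m ^ (1/q) := by
      rw [Real.div_rpow (Real.rpow_nonneg (sub_nonneg.2 ht.1) _) hm0.le]
      have h2a : ((t - a) ^ m) ^ (1/q) = (t - a) ^ (m / q) := by
        rw [← Real.rpow_mul (sub_nonneg.2 ht.1), mul_one_div]
      rw [h2a, hmq]
      have h2b : (t - a) ^ (α - 1/p) ≤ (b - a) ^ (α - 1/p) :=
        Real.rpow_le_rpow (sub_nonneg.2 ht.1) (by linarith [ht.2]) hαp.le
      exact (div_le_div_iff_of_pos_right (Real.rpow_pos_of_pos hm0 _)).2 h2b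
    calc (Real.Gamma α)⁻¹ * ‖∫ ξ in Ioc a t, ((t - ξ) ^ (α - 1)) • f ξ‖
        ≤ (Real.Gamma α)⁻¹ * (((t - a) ^ m / m) ^ (1/q) * E.toReal) :=
          mul_le_mul_of_nonneg_left h1 hG0
      _ ≤ (Real.Gamma α)⁻¹ * ((b - a) ^ (α - 1/p) / m ^ (1/q) * E.toReal) := by
          have := mul_le_mul_of_nonneg_right h2 hL0
          exact mul_le_mul_of_nonneg_left this hG0
      _ = (b - a) ^ (α - 1/p) / (Real.Gamma α * m ^ (1/q)) * E.toReal := by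
          field_simp
end

section
/- Let 0 < 1/p < α < 1 and let (u_n) be a sequence in E_{α,p} with (‖D^α_- u_n‖_{L^p}) bounded by M. Then the continuous representatives u_n are uniformly Hölder: for all n and all a ≤ t₁ < t₂ ≤ b, ‖u_n(t₂) - u_n(t₁)‖ ≤ (2M / (Γ(α)((α-1)q+1)^{1/q})) (t₂-t₁)^{α-1/p}, where q = p/(p-1); hence (u_n) is relatively compact in C([a,b];ℝ^d) by Ascoli's theorem. -/
open MeasureTheory Set

section AuxLemmas

open MeasureTheory Set BoundedContinuousFunction
open scoped BoundedContinuousFunction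

lemma aux_add_rpow {x y s : ℝ} (hx : 0 ≤ x) (hy : 0 ≤ y) (hs : 1 ≤ s) :
    x ^ s + y ^ s ≤ (x + y) ^ s := by
  lift x to NNReal using hx
  lift y to NNReal using hy
  exact_mod_cast NNReal.add_rpow_le_rpow_add x y hs


lemma memLq_of_integrable {q : ℝ} (hq0 : 0 < q) {g : ℝ → ℝ} {μ : Measure ℝ}
    (hm : AEStronglyMeasurable g μ) (hi : Integrable (fun x => |g x| ^ q) μ) :
    MemLp g (ENNReal.ofReal q) μ := by
  have hne : ENNReal.ofReal q ≠ 0 := by simp [hq0.not_ge]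
  refine (memLp_norm_rpow_iff (p := ENNReal.ofReal q) hm hne ENNReal.ofReal_ne_top).mp ?_
  rw [ENNReal.div_self hne ENNReal.ofReal_ne_top]
  rw [memLp_one_iff_integrable]
  simpa [ENNReal.toReal_ofReal hq0.le, Real.norm_eq_abs] using hi

lemma kernel_q_integral {α q τ c e : ℝ} (hα1 : α < 1) (hq0 : 0 < q) (hce : c ≤ e) (heτ : e ≤ τ)
    (hr1 : -1 < (α - 1) * q) :
    ∫ ξ in Set.Ioo c e, |(τ - ξ) ^ (α - 1)| ^ q =
      ((τ - c) ^ ((α - 1) * q + 1) - (τ - e) ^ ((α - 1) * q + 1)) / ((α - 1) * q + 1) := by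
  rw [← MeasureTheory.integral_Ioc_eq_integral_Ioo, ← intervalIntegral.integral_of_le hce]
  have h1 : ∫ ξ in c..e, |(τ - ξ) ^ (α - 1)| ^ q
      = ∫ ξ in c..e, (fun x : ℝ => x ^ ((α - 1) * q)) (τ - ξ) := by
    refine intervalIntegral.integral_congr fun ξ hξ => ?_
    rw [Set.uIcc_of_le hce] at hξ
    have hτξ : 0 ≤ τ - ξ := by have := hξ.2; linarith
    simp only []
    rw [Real.abs_rpow_of_nonneg hτξ, abs_of_nonneg hτξ, ← Real.rpow_mul hτξ]
  rw [h1, intervalIntegral.integral_comp_sub_left (fun x : ℝ => x ^ ((α - 1) * q)) τ,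
    integral_rpow (Or.inl hr1)]

lemma kernel_memLq {α q τ c e : ℝ} (hα1 : α < 1) (hq0 : 0 < q) (hce : c ≤ e) (heτ : e ≤ τ)
    (hr1 : -1 < (α - 1) * q) :
    MemLp (fun ξ => (τ - ξ) ^ (α - 1)) (ENNReal.ofReal q) (volume.restrict (Set.Ioo c e)) := by
  have hmeas : Measurable fun ξ : ℝ => (τ - ξ) ^ (α - 1) :=
    (measurable_const.sub measurable_id).pow measurable_const
  refine memLq_of_integrable hq0 hmeas.aestronglyMeasurable ?_
  have h0 : IntervalIntegrable (fun x : ℝ => x ^ ((α - 1) * q)) volume (τ - c) (τ - e) :=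
    intervalIntegral.intervalIntegrable_rpow' hr1
  have h2 := h0.comp_sub_left τ
  simp only [sub_sub_cancel] at h2
  rw [intervalIntegrable_iff_integrableOn_Ioo_of_le hce] at h2
  refine (h2.congr_fun (fun ξ hξ => ?_) measurableSet_Ioo :)
  have hτξ : 0 ≤ τ - ξ := by have := hξ.2; linarith
  rw [Real.abs_rpow_of_nonneg hτξ, abs_of_nonneg hτξ, ← Real.rpow_mul hτξ]

variable {V : Type*} [NormedAddCommGroup V] [NormedSpace ℝ V]

variable {V : Type*} [NormedAddCommGroup V] [NormedSpace ℝ V]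

lemma restrict_eq_restrict {a b c e : ℝ} (hsub : Set.Ioo c e ⊆ Set.Ioo a b) :
    (volume : Measure ℝ).restrict (Set.Ioo c e) = (μab a b).restrict (Set.Ioo c e) := by
  rw [μab, Measure.restrict_restrict measurableSet_Ioo, Set.inter_eq_left.mpr hsub]

lemma memLp_restrict {a b c e p : ℝ} (hsub : Set.Ioo c e ⊆ Set.Ioo a b) {f : ℝ → V}
    (hf : MemLp f (ENNReal.ofReal p) (μab a b)) :
    MemLp f (ENNReal.ofReal p) ((volume : Measure ℝ).restrict (Set.Ioo c e)) := by
  rw [restrict_eq_restrict hsub]; exact hf.restrict _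

lemma piece_integrable {a b c e p q : ℝ} (hpq : p.HolderConjugate q) (hce : c ≤ e)
    (hsub : Set.Ioo c e ⊆ Set.Ioo a b) {g : ℝ → ℝ}
    (hg : MemLp g (ENNReal.ofReal q) ((volume : Measure ℝ).restrict (Set.Ioo c e)))
    {f : ℝ → V} (hf : MemLp f (ENNReal.ofReal p) (μab a b)) :
    IntervalIntegrable (fun ξ => g ξ • f ξ) volume c e := by
  rw [intervalIntegrable_iff_integrableOn_Ioo_of_le hce]
  have hf' := memLp_restrict hsub hf
  have h1 : MemLp (g • f) 1 ((volume : Measure ℝ).restrict (Set.Ioo c e)) := by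
    have := hpq.symm.ennrealOfReal
    exact MemLp.smul hf' hg
  exact memLp_one_iff_integrable.mp h1

lemma piece_holder {a b c e p q : ℝ} (hpq : p.HolderConjugate q) (hce : c ≤ e)
    (hsub : Set.Ioo c e ⊆ Set.Ioo a b) {g : ℝ → ℝ}
    (hg : MemLp g (ENNReal.ofReal q) ((volume : Measure ℝ).restrict (Set.Ioo c e)))
    {f : ℝ → V} (hf : MemLp f (ENNReal.ofReal p) (μab a b)) :
    ‖∫ ξ in c..e, g ξ • f ξ‖ ≤ (∫ ξ in Set.Ioo c e, |g ξ| ^ q) ^ (1 / q) * LpNorm p a b f := by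
  have hf' := memLp_restrict hsub hf
  have hp0 : 0 < p := hpq.pos
  have hpne : ENNReal.ofReal p ≠ 0 := by simp [hp0.not_ge]
  rw [intervalIntegral.integral_of_le hce, MeasureTheory.integral_Ioc_eq_integral_Ioo]
  calc ‖∫ ξ in Set.Ioo c e, g ξ • f ξ‖ ≤ ∫ ξ in Set.Ioo c e, ‖g ξ • f ξ‖ :=
        norm_integral_le_integral_norm _
    _ = ∫ ξ in Set.Ioo c e, ‖g ξ‖ * ‖f ξ‖ := by
        simp only [norm_smul]
    _ ≤ (∫ ξ in Set.Ioo c e, ‖g ξ‖ ^ q) ^ (1 / q) * (∫ ξ in Set.Ioo c e, ‖f ξ‖ ^ p) ^ (1 / p) :=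
        by simpa [norm_norm] using integral_mul_norm_le_Lp_mul_Lq hpq.symm hg hf'.norm
    _ ≤ (∫ ξ in Set.Ioo c e, |g ξ| ^ q) ^ (1 / q) * LpNorm p a b f := by
        refine mul_le_mul_of_nonneg_left ?_ ?_
        · -- (∫ ‖f‖^p over piece)^(1/p) ≤ LpNorm
          have hint : Integrable (fun ξ => ‖f ξ‖ ^ p) (μab a b) := by
            simpa [ENNReal.toReal_ofReal hp0.le] using
              hf.integrable_norm_rpow hpne ENNReal.ofReal_ne_top
          have hmono : ∫ ξ in Set.Ioo c e, ‖f ξ‖ ^ p ≤ ∫ ξ, ‖f ξ‖ ^ p ∂(μab a b) := by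
            rw [restrict_eq_restrict hsub]
            exact setIntegral_le_integral hint
              (Filter.Eventually.of_forall fun ξ => Real.rpow_nonneg (norm_nonneg _) _)
          have hLp : LpNorm p a b f = (∫ ξ, ‖f ξ‖ ^ p ∂(μab a b)) ^ (1 / p) := by
            rw [LpNorm, hf.eLpNorm_eq_integral_rpow_norm hpne ENNReal.ofReal_ne_top,
              ENNReal.toReal_ofReal (Real.rpow_nonneg
                (integral_nonneg fun ξ => Real.rpow_nonneg (norm_nonneg _) _) _),
              ENNReal.toReal_ofReal hp0.le, one_div]
          rw [hLp]
          refine Real.rpow_le_rpow ?_ hmono (by positivity)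
          exact integral_nonneg fun ξ => Real.rpow_nonneg (norm_nonneg _) _
        · refine Real.rpow_nonneg ?_ _
          exact integral_nonneg fun ξ => Real.rpow_nonneg (abs_nonneg _) _
    -- note ‖g ξ‖ = |g ξ|

lemma main_holder {V : Type*} [NormedAddCommGroup V] [NormedSpace ℝ V]
    (a b α p q M : ℝ) (hp : 1 < p) (hpα : 1 / p < α) (hα1 : α < 1) (hq : q = p / (p - 1))
    (hM : 0 ≤ M) {f : ℝ → V} (hf : MemLp f (ENNReal.ofReal p) (μab a b))
    (hfM : LpNorm p a b f ≤ M) {t₁ t₂ : ℝ} (h1 : a ≤ t₁) (h12 : t₁ < t₂) (h2 : t₂ ≤ b) :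
    ‖Ileft a α f t₂ - Ileft a α f t₁‖ ≤
      2 * M / (Real.Gamma α * ((α - 1) * q + 1) ^ (1 / q)) * (t₂ - t₁) ^ (α - 1 / p) := by
  have hpq : p.HolderConjugate q := (Real.holderConjugate_iff_eq_conjExponent hp).mpr hq
  have hq1 : 1 < q := hpq.symm.lt
  have hq0 : 0 < q := lt_trans one_pos hq1
  have hqp : q * p⁻¹ = q - 1 := by
    have h := hpq.inv_add_inv_eq_one
    have h2 : q * (p⁻¹ + q⁻¹) = q * 1 := by rw [h]
    rw [mul_add, mul_inv_cancel₀ (ne_of_gt hq0)] at h2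
    linarith
  have hβ : 0 < α - 1 / p := sub_pos.mpr hpα
  have hK : (α - 1) * q + 1 = q * (α - 1 / p) := by
    rw [one_div, mul_sub, hqp]; ring
  have hKpos : 0 < (α - 1) * q + 1 := by rw [hK]; positivity
  have hr1 : -1 < (α - 1) * q := by linarith
  have hΓ : 0 < Real.Gamma α :=
    Real.Gamma_pos_of_pos (lt_trans (by positivity) hpα)
  set K := (α - 1) * q + 1 with hKdef
  set W : ℝ := ((t₂ - t₁) ^ K / K) ^ (1 / q) with hWdef
  have hWnn : 0 ≤ W := by
    apply Real.rpow_nonneg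
    apply div_nonneg (Real.rpow_nonneg (by linarith) _) hKpos.le
  have hLnn : 0 ≤ LpNorm p a b f := ENNReal.toReal_nonneg
  have hsub₁ : Set.Ioo a t₁ ⊆ Set.Ioo a b := Set.Ioo_subset_Ioo le_rfl (le_trans h12.le h2)
  have hsub₂ : Set.Ioo t₁ t₂ ⊆ Set.Ioo a b := Set.Ioo_subset_Ioo h1 h2
  have hk2a := kernel_memLq (τ := t₂) (c := a) (e := t₁) hα1 hq0 h1 h12.le hr1
  have hk2b := kernel_memLq (τ := t₂) (c := t₁) (e := t₂) hα1 hq0 h12.le le_rfl hr1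
  have hk1a := kernel_memLq (τ := t₁) (c := a) (e := t₁) hα1 hq0 h1 le_rfl hr1
  have hI2a := piece_integrable hpq h1 hsub₁ hk2a hf
  have hI2b := piece_integrable hpq h12.le hsub₂ hk2b hf
  have hI1a := piece_integrable hpq h1 hsub₁ hk1a hf
  -- splitting
  have hdiff : Ileft a α f t₂ - Ileft a α f t₁ = (Real.Gamma α)⁻¹ •
      ((∫ ξ in a..t₁, ((t₂ - ξ) ^ (α - 1) - (t₁ - ξ) ^ (α - 1)) • f ξ) +
        ∫ ξ in t₁..t₂, ((t₂ - ξ) ^ (α - 1)) • f ξ) := by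
    rw [Ileft, Ileft, ← smul_sub]
    congr 1
    rw [← intervalIntegral.integral_add_adjacent_intervals hI2a hI2b]
    have hsub' : (∫ ξ in a..t₁, ((t₂ - ξ) ^ (α - 1) - (t₁ - ξ) ^ (α - 1)) • f ξ) =
        (∫ ξ in a..t₁, ((t₂ - ξ) ^ (α - 1)) • f ξ) -
          ∫ ξ in a..t₁, ((t₁ - ξ) ^ (α - 1)) • f ξ := by
      rw [← intervalIntegral.integral_sub hI2a hI1a]
      refine intervalIntegral.integral_congr fun ξ _ => ?_
      rw [sub_smul]
    rw [hsub']
    abel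
  -- bound piece A
  have boundA : ‖∫ ξ in t₁..t₂, ((t₂ - ξ) ^ (α - 1)) • f ξ‖ ≤ W * M := by
    refine le_trans (piece_holder hpq h12.le hsub₂ hk2b hf) ?_
    have hJ : ∫ ξ in Set.Ioo t₁ t₂, |(t₂ - ξ) ^ (α - 1)| ^ q = (t₂ - t₁) ^ K / K := by
      rw [kernel_q_integral hα1 hq0 h12.le le_rfl hr1, sub_self,
        Real.zero_rpow (ne_of_gt hKpos), sub_zero]
    rw [hJ]
    exact mul_le_mul le_rfl hfM hLnn hWnn
  -- bound piece B
  have hgB : MemLp (fun ξ => (t₂ - ξ) ^ (α - 1) - (t₁ - ξ) ^ (α - 1)) (ENNReal.ofReal q)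
      ((volume : Measure ℝ).restrict (Set.Ioo a t₁)) := hk2a.sub hk1a
  have boundB : ‖∫ ξ in a..t₁, ((t₂ - ξ) ^ (α - 1) - (t₁ - ξ) ^ (α - 1)) • f ξ‖ ≤ W * M := by
    refine le_trans (piece_holder hpq h1 hsub₁ hgB hf) ?_
    have hqne : ENNReal.ofReal q ≠ 0 := by simp [hq0.not_ge]
    have hint1 : IntegrableOn (fun ξ => |(t₁ - ξ) ^ (α - 1)| ^ q) (Set.Ioo a t₁) volume := by
      simpa [IntegrableOn, ENNReal.toReal_ofReal hq0.le, Real.norm_eq_abs] using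
        hk1a.integrable_norm_rpow hqne ENNReal.ofReal_ne_top
    have hint2 : IntegrableOn (fun ξ => |(t₂ - ξ) ^ (α - 1)| ^ q) (Set.Ioo a t₁) volume := by
      simpa [IntegrableOn, ENNReal.toReal_ofReal hq0.le, Real.norm_eq_abs] using
        hk2a.integrable_norm_rpow hqne ENNReal.ofReal_ne_top
    have hintg : IntegrableOn
        (fun ξ => |(t₂ - ξ) ^ (α - 1) - (t₁ - ξ) ^ (α - 1)| ^ q) (Set.Ioo a t₁) volume := by
      simpa [IntegrableOn, ENNReal.toReal_ofReal hq0.le, Real.norm_eq_abs] using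
        hgB.integrable_norm_rpow hqne ENNReal.ofReal_ne_top
    have hptw : ∀ ξ ∈ Set.Ioo a t₁, |(t₂ - ξ) ^ (α - 1) - (t₁ - ξ) ^ (α - 1)| ^ q ≤
        |(t₁ - ξ) ^ (α - 1)| ^ q - |(t₂ - ξ) ^ (α - 1)| ^ q := by
      intro ξ hξ
      have hx1 : (0:ℝ) < t₁ - ξ := by linarith [hξ.2]
      have hx2 : (0:ℝ) < t₂ - ξ := by linarith [hξ.2]
      have hk1nn : (0:ℝ) ≤ (t₁ - ξ) ^ (α - 1) := Real.rpow_nonneg hx1.le _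
      have hk2nn : (0:ℝ) ≤ (t₂ - ξ) ^ (α - 1) := Real.rpow_nonneg hx2.le _
      have hle : (t₂ - ξ) ^ (α - 1) ≤ (t₁ - ξ) ^ (α - 1) :=
        Real.rpow_le_rpow_of_nonpos hx1 (by linarith) (by linarith)
      rw [abs_of_nonpos (by linarith), abs_of_nonneg hk1nn, abs_of_nonneg hk2nn, neg_sub]
      have := aux_add_rpow (x := (t₁ - ξ) ^ (α - 1) - (t₂ - ξ) ^ (α - 1))
        (y := (t₂ - ξ) ^ (α - 1)) (by linarith) hk2nn hq1.le
      rw [sub_add_cancel] at this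
      linarith
    have hJle : (∫ ξ in Set.Ioo a t₁, |(t₂ - ξ) ^ (α - 1) - (t₁ - ξ) ^ (α - 1)| ^ q) ≤
        (t₂ - t₁) ^ K / K := by
      have step1 : (∫ ξ in Set.Ioo a t₁, |(t₂ - ξ) ^ (α - 1) - (t₁ - ξ) ^ (α - 1)| ^ q) ≤
          ∫ ξ in Set.Ioo a t₁, (|(t₁ - ξ) ^ (α - 1)| ^ q - |(t₂ - ξ) ^ (α - 1)| ^ q) :=
        setIntegral_mono_on hintg (hint1.sub hint2) measurableSet_Ioo hptw
      have step2 : (∫ ξ in Set.Ioo a t₁, (|(t₁ - ξ) ^ (α - 1)| ^ q - |(t₂ - ξ) ^ (α - 1)| ^ q)) =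
          ((t₁ - a) ^ K - (t₁ - t₁) ^ K) / K - ((t₂ - a) ^ K - (t₂ - t₁) ^ K) / K := by
        rw [integral_sub hint1 hint2, kernel_q_integral hα1 hq0 h1 le_rfl hr1,
          kernel_q_integral hα1 hq0 h1 h12.le hr1]
      have hmono : (t₁ - a) ^ K ≤ (t₂ - a) ^ K :=
        Real.rpow_le_rpow (by linarith) (by linarith) hKpos.le
      have step3 : ((t₁ - a) ^ K - (t₁ - t₁) ^ K) / K - ((t₂ - a) ^ K - (t₂ - t₁) ^ K) / K ≤
          (t₂ - t₁) ^ K / K := by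
        rw [sub_self, Real.zero_rpow (ne_of_gt hKpos), sub_zero, div_sub_div_same]
        gcongr
        linarith
      linarith
    have hJnn : 0 ≤ ∫ ξ in Set.Ioo a t₁, |(t₂ - ξ) ^ (α - 1) - (t₁ - ξ) ^ (α - 1)| ^ q :=
      integral_nonneg fun ξ => Real.rpow_nonneg (abs_nonneg _) _
    refine mul_le_mul ?_ hfM hLnn hWnn
    exact Real.rpow_le_rpow hJnn hJle (by positivity)
  -- assemble
  rw [hdiff]
  have hWeq : W = (t₂ - t₁) ^ (α - 1 / p) / K ^ (1 / q) := by
    rw [hWdef, Real.div_rpow (Real.rpow_nonneg (by linarith) _) hKpos.le,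
      ← Real.rpow_mul (by linarith : (0:ℝ) ≤ t₂ - t₁)]
    congr 2
    rw [hK]
    field_simp
  calc ‖(Real.Gamma α)⁻¹ •
      ((∫ ξ in a..t₁, ((t₂ - ξ) ^ (α - 1) - (t₁ - ξ) ^ (α - 1)) • f ξ) +
        ∫ ξ in t₁..t₂, ((t₂ - ξ) ^ (α - 1)) • f ξ)‖
      = (Real.Gamma α)⁻¹ * ‖(∫ ξ in a..t₁, ((t₂ - ξ) ^ (α - 1) - (t₁ - ξ) ^ (α - 1)) • f ξ) +
        ∫ ξ in t₁..t₂, ((t₂ - ξ) ^ (α - 1)) • f ξ‖ := by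
        rw [norm_smul, Real.norm_eq_abs, abs_of_pos (inv_pos.mpr hΓ)]
    _ ≤ (Real.Gamma α)⁻¹ * (W * M + W * M) := by
        refine mul_le_mul_of_nonneg_left ?_ (inv_pos.mpr hΓ).le
        exact le_trans (norm_add_le _ _) (add_le_add boundB boundA)
    _ = 2 * M / (Real.Gamma α * K ^ (1 / q)) * (t₂ - t₁) ^ (α - 1 / p) := by
        rw [hWeq]
        have hKq : 0 < K ^ (1 / q) := Real.rpow_pos_of_pos hKpos _
        field_simp
        ring

set_option synthInstance.maxHeartbeats 1000000 in
set_option maxHeartbeats 1600000 in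
lemma part2 {d : ℕ} (a b C β : ℝ) (hab : a < b) (hC : 0 ≤ C) (hβ : 0 < β)
    (v : ℕ → ℝ → EuclideanSpace ℝ (Fin d))
    (hH : ∀ n, ∀ t₁ t₂ : ℝ, a ≤ t₁ → t₁ < t₂ → t₂ ≤ b →
      ‖v n t₂ - v n t₁‖ ≤ C * (t₂ - t₁) ^ β)
    (hv0 : ∀ n, v n a = 0) :
    ∃ φ : ℕ → ℕ, StrictMono φ ∧
      ∃ g : ℝ → EuclideanSpace ℝ (Fin d), ContinuousOn g (Set.Icc a b) ∧
        TendstoUniformlyOn (fun k => v (φ k)) g Filter.atTop (Set.Icc a b) := by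
  -- symmetric Hölder bound
  have hD : ∀ n, ∀ s ∈ Set.Icc a b, ∀ t ∈ Set.Icc a b,
      dist (v n t) (v n s) ≤ C * |t - s| ^ β := by
    intro n s hs t ht
    rcases lt_trichotomy s t with h | h | h
    · rw [dist_eq_norm, abs_of_pos (by linarith)]
      exact hH n s t hs.1 h ht.2
    · simp [h, Real.zero_rpow hβ.ne']
    · rw [dist_comm, dist_eq_norm, abs_sub_comm, abs_of_pos (by linarith : (0:ℝ) < s - t)]
      exact hH n t s ht.1 h hs.2
  set mo : ℝ → ℝ := fun t => C * |t| ^ β with hmo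
  have hmo0 : Filter.Tendsto mo (nhds 0) (nhds 0) := by
    have hcont : Continuous mo :=
      continuous_const.mul (continuous_abs.rpow_const fun _ => Or.inr hβ.le)
    have h0 : mo 0 = 0 := by simp [hmo, Real.zero_rpow hβ.ne']
    simpa [h0] using hcont.tendsto 0
  set F : ℕ → (Set.Icc a b) → EuclideanSpace ℝ (Fin d) := fun n x => v n x with hF
  have hmod : ∀ (x y : Set.Icc a b) (n : ℕ), dist (F n x) (F n y) ≤ mo (dist x y) := by
    intro x y n
    have : dist (F n x) (F n y) ≤ C * |(x:ℝ) - y| ^ β := hD n y y.2 x x.2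
    simpa [mo, Subtype.dist_eq, Real.dist_eq, abs_abs] using this
  have hequi : Equicontinuous F := Metric.equicontinuous_of_continuity_modulus mo hmo0 F hmod
  have hcont : ∀ n, Continuous (F n) := fun n => hequi.continuous n
  set G : ℕ → (Set.Icc a b) →ᵇ EuclideanSpace ℝ (Fin d) :=
    fun n => BoundedContinuousFunction.mkOfCompact ⟨F n, hcont n⟩ with hG
  set R := C * (b - a) ^ β with hR
  have hin : ∀ (h : (Set.Icc a b) →ᵇ EuclideanSpace ℝ (Fin d)) (x : Set.Icc a b),
      h ∈ Set.range G → h x ∈ Metric.closedBall 0 R := by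
    rintro h x ⟨n, rfl⟩
    rw [Metric.mem_closedBall]
    have hx2 : (x:ℝ) ∈ Set.Icc a b := x.2
    have : dist (v n x) (v n a) ≤ C * |(x:ℝ) - a| ^ β :=
      hD n a ⟨le_rfl, hab.le⟩ x hx2
    rw [hv0 n, dist_zero_right] at this
    calc dist (G n x) 0 = ‖v n (x:ℝ)‖ := by
          simp [hG, BoundedContinuousFunction.mkOfCompact_apply, dist_zero_right, hF]
      _ ≤ C * |(x:ℝ) - a| ^ β := this
      _ ≤ R := by
          rw [hR]
          have h1 : |(x:ℝ) - a| ≤ b - a := by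
            rw [abs_of_nonneg (by linarith [hx2.1])]
            linarith [hx2.2]
          exact mul_le_mul_of_nonneg_left
            (Real.rpow_le_rpow (abs_nonneg _) h1 hβ.le) hC
  have hequiA : Equicontinuous ((↑) : (Set.range G) → (Set.Icc a b) → EuclideanSpace ℝ (Fin d)) := by
    refine Metric.equicontinuous_of_continuity_modulus mo hmo0 _ fun x y i => ?_
    obtain ⟨n, hn⟩ := i.2
    have : (i : (Set.Icc a b) →ᵇ EuclideanSpace ℝ (Fin d)) = G n := hn.symm
    rw [this]
    exact hmod x y n
  have hcomp : IsCompact (closure (Set.range G)) :=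
    BoundedContinuousFunction.arzela_ascoli (Metric.closedBall 0 R)
      (isCompact_closedBall _ _) (Set.range G) hin hequiA
  obtain ⟨L, _, φ, hφ, hconv⟩ :=
    hcomp.tendsto_subseq (x := G) fun n => subset_closure (Set.mem_range_self n)
  have huc : TendstoUniformly (fun k x => G (φ k) x) (⇑L) Filter.atTop :=
    BoundedContinuousFunction.tendsto_iff_tendstoUniformly.mp hconv
  classical
  refine ⟨φ, hφ, fun t => if h : t ∈ Set.Icc a b then L ⟨t, h⟩ else 0, ?_, ?_⟩
  · rw [continuousOn_iff_continuous_restrict]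
    have : (Set.Icc a b).domRestrict (fun t =>
        if h : t ∈ Set.Icc a b then L ⟨t, h⟩ else 0) = ⇑L := by
      funext x
      simp only [Set.domRestrict_apply]
      rw [dif_pos x.2]
    rw [this]
    exact L.continuous
  · rw [tendstoUniformlyOn_iff_tendstoUniformly_comp_coe]
    have hg : ((fun t => if h : t ∈ Set.Icc a b then L ⟨t, h⟩ else 0) ∘
        ((↑) : Set.Icc a b → ℝ)) = ⇑L := by
      funext x
      simp only [Function.comp_apply]
      rw [dif_pos x.2]
    rw [hg]
    exact huc

end AuxLemmas

/-- for `0 < 1/p < α < 1`, a sequence `(uₙ) ⊂ E_{α,p}` with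
`‖D^α_- uₙ‖_{L^p} ≤ M` has uniformly Hölder continuous representatives:
`‖uₙ(t₂) - uₙ(t₁)‖ ≤ (2M/(Γ(α)((α-1)q+1)^{1/q}))(t₂-t₁)^{α-1/p}` with `q = p/(p-1)`;
hence, by Ascoli's theorem, `(uₙ)` is relatively compact in `C([a,b];ℝ^d)`:
some subsequence converges uniformly on `[a,b]`. -/
theorem E_bounded_seq_uniformly_holder (a b : ℝ) (hab : a < b) (d : ℕ) (α p q M : ℝ)
    (hp : 1 < p) (hpα : 1 / p < α) (hα1 : α < 1) (hq : q = p / (p - 1)) (hM : 0 ≤ M)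
    (u : ℕ → ℝ → EuclideanSpace ℝ (Fin d)) (hmem : ∀ n, MemE a b α p (u n))
    (hbd : ∀ n, LpNorm p a b (Dleft a α (u n)) ≤ M) :
    (∀ n, ∀ t₁ t₂ : ℝ, a ≤ t₁ → t₁ < t₂ → t₂ ≤ b →
      ‖Ileft a α (Dleft a α (u n)) t₂ - Ileft a α (Dleft a α (u n)) t₁‖ ≤
        2 * M / (Real.Gamma α * ((α - 1) * q + 1) ^ (1 / q)) * (t₂ - t₁) ^ (α - 1 / p)) ∧
    ∃ φ : ℕ → ℕ, StrictMono φ ∧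
      ∃ g : ℝ → EuclideanSpace ℝ (Fin d), ContinuousOn g (Set.Icc a b) ∧
        TendstoUniformlyOn (fun k => Ileft a α (Dleft a α (u (φ k)))) g Filter.atTop
          (Set.Icc a b) := by
  have hpq : p.HolderConjugate q := (Real.holderConjugate_iff_eq_conjExponent hp).mpr hq
  have hq1 : 1 < q := hpq.symm.lt
  have hq0 : 0 < q := lt_trans one_pos hq1
  have hqp : q * p⁻¹ = q - 1 := by
    have h := hpq.inv_add_inv_eq_one
    have h2 : q * (p⁻¹ + q⁻¹) = q * 1 := by rw [h]
    rw [mul_add, mul_inv_cancel₀ (ne_of_gt hq0)] at h2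
    linarith
  have hβ : 0 < α - 1 / p := sub_pos.mpr hpα
  have hK : (α - 1) * q + 1 = q * (α - 1 / p) := by
    rw [one_div, mul_sub, hqp]; ring
  have hKpos : 0 < (α - 1) * q + 1 := by rw [hK]; positivity
  have hΓ : 0 < Real.Gamma α := Real.Gamma_pos_of_pos (lt_trans (by positivity) hpα)
  have part1 : ∀ n, ∀ t₁ t₂ : ℝ, a ≤ t₁ → t₁ < t₂ → t₂ ≤ b →
      ‖Ileft a α (Dleft a α (u n)) t₂ - Ileft a α (Dleft a α (u n)) t₁‖ ≤
        2 * M / (Real.Gamma α * ((α - 1) * q + 1) ^ (1 / q)) * (t₂ - t₁) ^ (α - 1 / p) :=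
    fun n t₁ t₂ h1 h12 h2 =>
      main_holder a b α p q M hp hpα hα1 hq hM (hmem n).2.1 (hbd n) h1 h12 h2
  refine ⟨part1, ?_⟩
  have hC : 0 ≤ 2 * M / (Real.Gamma α * ((α - 1) * q + 1) ^ (1 / q)) := by
    apply div_nonneg (by linarith)
    exact mul_nonneg hΓ.le (Real.rpow_nonneg hKpos.le _)
  refine part2 a b _ _ hab hC hβ (fun n => Ileft a α (Dleft a α (u n)))
    (fun n t₁ t₂ h1 h12 h2 => part1 n t₁ t₂ h1 h12 h2) (fun n => ?_)
  simp only [Ileft, intervalIntegral.integral_same, smul_zero]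
end
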